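/- Let p be a source on n ≥ 2 symbols with p(1) ≤ 2·p(n−1). Then there exists a codeword-length vector l ∈ ℒ_n attaining R*(l,p) = R*_opt(p) such that every entry l(i) lies in {⌊lg n⌋, ⌈lg n⌉} and ∑_{i=1}^n 2^{−l(i)} = 1 (i.e., the optimum is attained by a complete tree). -/

import Mathlib

/-- A source: a positive, monotonically nonincreasing probability mass function on `Fin n`. -/
def IsSource (n : ℕ) (p : Fin n → ℝ) : Prop :=
  (∀ i, 0 < p i) ∧ (∑ i, p i = 1) ∧ (∀ i j : Fin n, i ≤ j → p j ≤ p i)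

/-- A codeword-length vector: positive integer lengths satisfying the Kraft inequality. -/
def IsCLV (n : ℕ) (l : Fin n → ℤ) : Prop :=
  (∀ i, 1 ≤ l i) ∧ (∑ i, (2:ℝ) ^ (-(l i)) ≤ 1)

/-- Maximum pointwise redundancy `R*(l,p) = max_i (l(i) + lg p(i))`. -/
noncomputable def Rstar (n : ℕ) (l : Fin n → ℤ) (p : Fin n → ℝ) : ℝ :=
  ⨆ i : Fin n, ((l i : ℝ) + Real.logb 2 (p i))

/-- Minimum maximum pointwise redundancy over all codeword-length vectors. -/
noncomputable def RstarOpt (n : ℕ) (p : Fin n → ℝ) : ℝ :=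
  sInf {r : ℝ | ∃ l : Fin n → ℤ, IsCLV n l ∧ Rstar n l p = r}

/-- Sum over `range N` of a step function. -/
lemma aux_sum_range_ite (N m : ℕ) (A B : ℝ) (h : m ≤ N) :
    ∑ j ∈ Finset.range N, (if j < m then A else B) = (m : ℝ) * A + ((N - m : ℕ) : ℝ) * B := by
  induction N with
  | zero =>
    interval_cases m
    simp
  | succ k ih =>
    rw [Finset.sum_range_succ]
    rcases Nat.lt_or_ge k m with hk | hk
    · have hm : m = k + 1 := by omega
      subst hm
      have h2 : (∑ x ∈ Finset.range k, if x < k + 1 then A else B) = (k:ℝ) * A := by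
        rw [Finset.sum_congr rfl (fun j hj => if_pos (by
          have := Finset.mem_range.mp hj; omega)), Finset.sum_const]
        simp [mul_comm]
      rw [h2, if_pos hk]
      have h3 : k + 1 - (k + 1) = 0 := by omega
      rw [h3]
      push_cast
      ring
    · rw [ih hk, if_neg (by omega)]
      have h1 : (k + 1 - m : ℕ) = (k - m : ℕ) + 1 := by omega
      rw [h1]
      push_cast
      ring

lemma aux_zpow_neg_mul (c : ℕ) : (2:ℝ) ^ (-(c:ℤ)) * (2:ℝ) ^ (c:ℕ) = 1 := by
  rw [← zpow_natCast (2:ℝ) c, ← zpow_add₀ (two_ne_zero)]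
  norm_num

lemma aux_zpow_anti {b c : ℤ} (h : b ≤ c) : (2:ℝ) ^ (-c) ≤ (2:ℝ) ^ (-b) :=
  zpow_le_zpow_right₀ one_le_two (by omega)

theorem stmt12 (n : ℕ) (hn : 2 ≤ n) (p : Fin n → ℝ) (hp : IsSource n p)
    (hcond : p ⟨0, by omega⟩ ≤ 2 * p ⟨n - 2, by omega⟩) :
    ∃ l : Fin n → ℤ, IsCLV n l ∧ Rstar n l p = RstarOpt n p ∧
      (∀ i, l i = Nat.log 2 n ∨ l i = Nat.clog 2 n) ∧
      ∑ i, (2:ℝ) ^ (-(l i)) = 1 := by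
  have hn0 : n ≠ 0 := by omega
  haveI : Nonempty (Fin n) := ⟨⟨0, by omega⟩⟩
  set L := Nat.log 2 n with hLdef
  have hL1 : 2 ^ L ≤ n := Nat.pow_log_le_self 2 hn0
  have hL2 : n < 2 ^ (L + 1) := Nat.lt_pow_succ_log_self (by norm_num) n
  have hLpos : 1 ≤ L := by
    have h : (2:ℕ) ^ 1 ≤ n := by simpa using hn
    have h2 := (Nat.le_log_iff_pow_le (by norm_num) hn0).mpr h
    simpa using h2
  have hpow : 2 ^ (L + 1) = 2 * 2 ^ L := by ring
  set a := 2 ^ (L + 1) - n with hadef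
  have han : a + n = 2 ^ (L + 1) := by omega
  have haln : a ≤ n := by omega
  set l : Fin n → ℤ := fun i => if (i : ℕ) < a then (L : ℤ) else (L : ℤ) + 1 with hldef
  have hl_lb : ∀ i, 1 ≤ l i := by
    intro i
    simp only [hldef]
    split
    · exact_mod_cast hLpos
    · omega
  have hone : (2:ℝ) ^ (-((L:ℤ)+1)) * (2:ℝ) ^ (L+1 : ℕ) = 1 := by
    have h := aux_zpow_neg_mul (L+1)
    have h2 : (-(((L+1:ℕ)):ℤ)) = -((L:ℤ)+1) := by push_cast; ring
    rw [h2] at h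
    exact h
  have honeL : (2:ℝ) ^ (-(L:ℤ)) * (2:ℝ) ^ (L : ℕ) = 1 := aux_zpow_neg_mul L
  -- Kraft equality
  have hkraft : ∑ i, (2:ℝ) ^ (-(l i)) = 1 := by
    have heq : ∑ i, (2:ℝ) ^ (-(l i))
        = ∑ j ∈ Finset.range n, (if j < a then (2:ℝ) ^ (-(L:ℤ)) else (2:ℝ) ^ (-((L:ℤ)+1))) := by
      rw [← Fin.sum_univ_eq_sum_range (fun j => if j < a then (2:ℝ) ^ (-(L:ℤ)) else (2:ℝ) ^ (-((L:ℤ)+1)))]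
      refine Finset.sum_congr rfl fun i _ => ?_
      simp only [hldef]
      split <;> rfl
    rw [heq, aux_sum_range_ite n a _ _ haln]
    have hY : (2:ℝ) ^ (-(L:ℤ)) = 2 * (2:ℝ) ^ (-((L:ℤ)+1)) := by
      rw [show (-(L:ℤ)) = 1 + (-((L:ℤ)+1)) by ring, zpow_add₀ (two_ne_zero), zpow_one]
    have hna : ((n - a : ℕ) : ℝ) = (n : ℝ) - (a : ℝ) := Nat.cast_sub haln
    have hcast : (a:ℝ) + (n:ℝ) = (2:ℝ) ^ (L+1 : ℕ) := by exact_mod_cast congrArg (Nat.cast : ℕ → ℝ) han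
    rw [hY, hna]
    linear_combination ((2:ℝ) ^ (-((L:ℤ)+1))) * hcast + hone
  have hclv : IsCLV n l := ⟨hl_lb, le_of_eq hkraft⟩
  -- entries are log or clog
  have hentries : ∀ i, l i = Nat.log 2 n ∨ l i = Nat.clog 2 n := by
    intro i
    by_cases hia : (i : ℕ) < a
    · left; simp [hldef, hia]; exact hLdef
    · right
      have hlt : 2 ^ L < n := by
        have : a < n := lt_of_le_of_lt (Nat.not_lt.mp hia) i.isLt
        omega
      have hclog : Nat.clog 2 n = L + 1 := by
        have h1 : Nat.clog 2 n ≤ L + 1 := (Nat.clog_le_iff_le_pow (by norm_num)).mpr (le_of_lt hL2)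
        have h2 : L < Nat.clog 2 n := (Nat.lt_clog_iff_pow_lt (by norm_num)).mpr hlt
        omega
      have h3 : l i = (L:ℤ) + 1 := by simp [hldef, hia]
      rw [h3, hclog]
      push_cast
      ring
  -- main optimality
  have hppos := hp.1
  have hmono := hp.2.2
  have key : ∀ l' : Fin n → ℤ, IsCLV n l' → Rstar n l p ≤ Rstar n l' p := by
    intro l' hl'
    by_contra hcon
    push_neg at hcon
    have hbddl : BddAbove (Set.range fun i : Fin n => ((l' i : ℝ) + Real.logb 2 (p i))) :=
      (Set.finite_range _).bddAbove
    have hub : ∀ i, (l' i : ℝ) + Real.logb 2 (p i) ≤ Rstar n l' p := fun i => le_ciSup hbddl i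
    obtain ⟨i0, hi0⟩ := exists_lt_of_lt_ciSup
      (show Rstar n l' p < ⨆ i : Fin n, ((l i : ℝ) + Real.logb 2 (p i)) from hcon)
    set m := (i0 : ℕ) with hmdef
    set lI := l i0 with hlI
    have hmn' : m < n := i0.isLt
    have H1 : ∀ i : Fin n, (i : ℕ) ≤ m → l' i ≤ lI - 1 := by
      intro i hi
      have hple : p i0 ≤ p i := hmono i i0 hi
      have hlog : Real.logb 2 (p i0) ≤ Real.logb 2 (p i) :=
        Real.logb_le_logb_of_le (by norm_num) (hppos i0) hple
      have h3 : (l' i : ℝ) < (lI : ℝ) := by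
        have := hub i
        linarith
      have h4 : l' i < lI := by exact_mod_cast h3
      omega
    have H2 : ∀ i : Fin n, (i : ℕ) ≤ n - 2 → l' i ≤ lI := by
      intro i hi
      have h1 : p i0 ≤ p ⟨0, by omega⟩ := hmono ⟨0, by omega⟩ i0 (by simp [Fin.le_def])
      have h2 : p ⟨n - 2, by omega⟩ ≤ p i := hmono i ⟨n - 2, by omega⟩ (by simp [Fin.le_def]; omega)
      have hle2 : p i0 ≤ 2 * p i := by linarith
      have hlog : Real.logb 2 (p i0) ≤ 1 + Real.logb 2 (p i) := by
        have hlb : Real.logb 2 (p i0) ≤ Real.logb 2 (2 * p i) :=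
          Real.logb_le_logb_of_le (by norm_num) (hppos i0) hle2
        rw [Real.logb_mul two_ne_zero (ne_of_gt (hppos i))] at hlb
        simpa [Real.logb_self_eq_one] using hlb
      have h3 : (l' i : ℝ) < (lI : ℝ) + 1 := by
        have := hub i
        linarith
      have h4 : l' i < lI + 1 := by exact_mod_cast h3
      omega
    set X := (2:ℝ) ^ (-lI) with hXdef
    have hXpos : 0 < X := by positivity
    have hterm1 : ∀ i : Fin n, (i : ℕ) ≤ m → 2 * X ≤ (2:ℝ) ^ (-(l' i)) := by
      intro i hi
      have h4 : (2:ℝ) ^ (-(lI - 1)) ≤ (2:ℝ) ^ (-(l' i)) := aux_zpow_anti (H1 i hi)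
      have h5 : (2:ℝ) ^ (-(lI - 1)) = 2 * X := by
        rw [hXdef, show -(lI - 1) = 1 + (-lI) by ring, zpow_add₀ (two_ne_zero), zpow_one]
      linarith
    have hterm2 : ∀ i : Fin n, (i : ℕ) ≤ n - 2 → X ≤ (2:ℝ) ^ (-(l' i)) := fun i hi =>
      aux_zpow_anti (H2 i hi)
    -- the key arithmetic bound
    have hX1 : 1 ≤ ((n:ℝ) + (m:ℝ)) * X := by
      by_cases hia : m < a
      · have hlIL : lI = (L:ℤ) := by simp [hlI, hldef, hmdef, hia]; exact hia
        have hXeq : (2:ℝ) ^ (L:ℕ) * X = 1 := by rw [hXdef, hlIL, mul_comm]; exact honeL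
        have hc : ((2:ℝ) ^ (L:ℕ)) ≤ (n:ℝ) + (m:ℝ) := by
          have h6 : ((2^L : ℕ):ℝ) ≤ (n:ℝ) := by exact_mod_cast hL1
          push_cast at h6
          have h7 : (0:ℝ) ≤ (m:ℝ) := Nat.cast_nonneg m
          linarith
        nlinarith
      · have hlIL : lI = (L:ℤ) + 1 := by simp [hlI, hldef, hmdef, hia]; exact not_lt.mp hia
        have hXeq : (2:ℝ) ^ (L+1:ℕ) * X = 1 := by rw [hXdef, hlIL, mul_comm]; exact hone
        have hc : ((2:ℝ) ^ (L+1:ℕ)) ≤ (n:ℝ) + (m:ℝ) := by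
          have h6 : 2 ^ (L+1) ≤ n + m := by omega
          have h7 : ((2^(L+1) : ℕ):ℝ) ≤ ((n + m : ℕ):ℝ) := by exact_mod_cast h6
          push_cast at h7
          linarith
        nlinarith
    -- derive the contradiction 1 < kraft sum
    have hsum : 1 < ∑ i : Fin n, (2:ℝ) ^ (-(l' i)) := by
      rcases Nat.lt_or_ge m (n-1) with hmn | hmn
      · -- m ≤ n - 2 : split off the last index
        set F : ℕ → ℝ := fun j => if h : j < n then (2:ℝ) ^ (-(l' ⟨j, h⟩)) else 0 with hFdef
        have hFeq : ∑ i : Fin n, (2:ℝ) ^ (-(l' i)) = ∑ j ∈ Finset.range n, F j := by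
          rw [← Fin.sum_univ_eq_sum_range F]
          refine Finset.sum_congr rfl fun i _ => ?_
          simp [hFdef, i.isLt]
        have hsplit : ∑ j ∈ Finset.range n, F j
            = ∑ j ∈ Finset.range (n-1), F j + F (n-1) := by
          conv_lhs => rw [show n = (n-1)+1 from by omega, Finset.sum_range_succ]
        have hlow : ∀ j ∈ Finset.range (n-1), (if j < m + 1 then 2*X else X) ≤ F j := by
          intro j hj
          have hjr := Finset.mem_range.mp hj
          have hjn : j < n := by omega
          have hj2 : j ≤ n - 2 := by omega
          simp only [hFdef, dif_pos hjn]
          by_cases hjm : j < m + 1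
          · rw [if_pos hjm]; exact hterm1 ⟨j, hjn⟩ (by simpa using Nat.lt_succ_iff.mp hjm)
          · rw [if_neg hjm]; exact hterm2 ⟨j, hjn⟩ hj2
        have hsum1 : ∑ j ∈ Finset.range (n-1), (if j < m+1 then 2*X else X)
            ≤ ∑ j ∈ Finset.range (n-1), F j := Finset.sum_le_sum hlow
        have hsum2 : ∑ j ∈ Finset.range (n-1), (if j < m+1 then 2*X else X)
            = ((m+1:ℕ):ℝ) * (2*X) + (((n-1) - (m+1) : ℕ):ℝ) * X :=
          aux_sum_range_ite (n-1) (m+1) _ _ (by omega)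
        have hcast2 : (((n-1)-(m+1) : ℕ):ℝ) = (n:ℝ) - (m:ℝ) - 2 := by
          have h10 : ((n-1)-(m+1) : ℕ) + (m + 2) = n := by omega
          have h11 := congrArg (Nat.cast : ℕ → ℝ) h10
          push_cast at h11
          linarith
        have hval : ∑ j ∈ Finset.range (n-1), (if j < m+1 then 2*X else X)
            = ((n:ℝ) + (m:ℝ)) * X := by
          rw [hsum2, hcast2]
          push_cast
          ring
        have hFlast : 0 < F (n-1) := by
          have hjn : n - 1 < n := by omega
          simp only [hFdef, dif_pos hjn]
          positivity
        rw [hFeq, hsplit]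
        have := hval ▸ hsum1
        linarith
      · -- m = n - 1 : every index gets the strong bound
        have hge : ∀ i : Fin n, (i:ℕ) ≤ m := fun i => by have := i.isLt; omega
        have hsumge : (n:ℝ) * (2*X) ≤ ∑ i : Fin n, (2:ℝ) ^ (-(l' i)) := by
          calc (n:ℝ) * (2*X) = ∑ _i : Fin n, (2*X) := by
                rw [Finset.sum_const, Finset.card_univ, Fintype.card_fin, nsmul_eq_mul]
            _ ≤ _ := Finset.sum_le_sum (fun i _ => hterm1 i (hge i))
        have hm : (m:ℝ) = (n:ℝ) - 1 := by
          have : m = n - 1 := by omega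
          rw [this]
          have h11 := congrArg (Nat.cast : ℕ → ℝ) (show (n-1 : ℕ) + 1 = n by omega)
          push_cast at h11
          linarith
        rw [hm] at hX1
        nlinarith
    linarith [hl'.2]
  have hopt : Rstar n l p = RstarOpt n p := by
    apply le_antisymm
    · refine le_csInf ⟨Rstar n l p, l, hclv, rfl⟩ ?_
      rintro r ⟨l', hl', rfl⟩
      exact key l' hl'
    · refine csInf_le ⟨Rstar n l p, ?_⟩ ⟨l, hclv, rfl⟩
      rintro r ⟨l', hl', rfl⟩
      exact key l' hl'
  exact ⟨l, hclv, hopt, hentries, hkraft⟩
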